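/- Let G be a daisy cube of dimension n, i.e., the subgraph of the hypercube Q_n induced by a nonempty downward-closed vertex set V ⊆ {0,1}^n, and for i ∈ {1,…,n} let |E_i| be the number of edges of G using direction i. Then the Wiener index of G satisfies W(G) = |V(G)|·|E(G)| − Σ_{i=1}^n |E_i|². -/

import Mathlib

/-- Vertices of the hypercube `Q_n`: binary strings of length `n`. -/
abbrev Vtx (n : ℕ) := Fin n → Bool

/-- The subgraph of the hypercube `Q_n` induced by a set `V` of vertices:
two vertices are adjacent iff they differ in precisely one coordinate
(i.e. their Hamming distance is `1`). -/
def cubeGraph {n : ℕ} (V : Finset (Vtx n)) : SimpleGraph {u : Vtx n // u ∈ V} where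
  Adj u v := hammingDist u.1 v.1 = 1
  symm := ⟨fun u v h => (hammingDist_comm v.1 u.1).trans h⟩
  loopless := ⟨fun u h => by simp [hammingDist_self] at h⟩

instance {n : ℕ} {V : Finset (Vtx n)} : DecidableRel (cubeGraph V).Adj :=
  fun u v => inferInstanceAs (Decidable (hammingDist u.1 v.1 = 1))

/-- A set of vertices of `Q_n` is downward closed if `u ≤ v` componentwise
and `v ∈ V` imply `u ∈ V`. -/
def DownClosed {n : ℕ} (V : Finset (Vtx n)) : Prop :=
  ∀ u v : Vtx n, (∀ i, u i ≤ v i) → v ∈ V → u ∈ V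

/-- The Wiener index: the sum of graph distances over all unordered pairs of vertices. -/
noncomputable def wiener {α : Type*} [Fintype α] [DecidableEq α] (G : SimpleGraph α) : ℕ :=
  ∑ p : Sym2 α, Sym2.lift ⟨fun u v => G.dist u v, fun _ _ => SimpleGraph.dist_comm⟩ p

/-- The set of edges of the induced subgraph on `V` using direction `i`,
i.e. whose endpoints differ in coordinate `i`. -/
def dirEdges {n : ℕ} (V : Finset (Vtx n)) (i : Fin n) : Finset (Sym2 {u : Vtx n // u ∈ V}) :=
  (cubeGraph V).edgeFinset.filter
    (fun e => Sym2.lift ⟨fun u v => decide (u.1 i ≠ v.1 i),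
      fun u v => by rw [decide_eq_decide]; exact ne_comm⟩ e = true)

section Aux

variable {n : ℕ} {V : Finset (Vtx n)}

lemma ham_filter (u v : Vtx n) :
    hammingDist u v = (Finset.univ.filter fun j => u j ≠ v j).card := rfl

lemma filter_update (u v : Vtx n) (i : Fin n) :
    (Finset.univ.filter fun j => Function.update u i (v i) j ≠ v j)
      = (Finset.univ.filter fun j => u j ≠ v j).erase i := by
  ext j
  rcases eq_or_ne j i with rfl | hj
  · simp
  · simp [Function.update_of_ne hj, hj]

lemma ham_update_self (u : Vtx n) (i : Fin n) (b : Bool) (h : u i ≠ b) :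
    hammingDist u (Function.update u i b) = 1 := by
  rw [ham_filter]
  have : (Finset.univ.filter fun j => u j ≠ Function.update u i b j) = {i} := by
    ext j
    rcases eq_or_ne j i with rfl | hj
    · simp [h]
    · simp [Function.update_of_ne hj, hj]
  rw [this, Finset.card_singleton]

/-- membership of the downward dflip -/
lemma flip_mem (hdc : DownClosed V) (u : {u : Vtx n // u ∈ V}) (i : Fin n) :
    Function.update u.1 i false ∈ V := by
  refine hdc _ u.1 (fun j => ?_) u.2
  rcases eq_or_ne j i with rfl | hj
  · simp
  · simp [Function.update_of_ne hj]

/-- the downward dflip as an element of the subtype -/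
def dflip (hdc : DownClosed V) (u : {u : Vtx n // u ∈ V}) (i : Fin n) :
    {u : Vtx n // u ∈ V} :=
  ⟨Function.update u.1 i false, flip_mem hdc u i⟩

lemma exists_walk (hdc : DownClosed V) :
    ∀ (k : ℕ) (u v : {u : Vtx n // u ∈ V}), hammingDist u.1 v.1 = k →
      ∃ p : (cubeGraph V).Walk u v, p.length = k := by
  intro k
  induction k with
  | zero =>
    intro u v h
    have : u = v := Subtype.ext (hammingDist_eq_zero.mp h)
    subst this
    exact ⟨SimpleGraph.Walk.nil, rfl⟩
  | succ k ih =>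
    intro u v h
    have hne : hammingDist u.1 v.1 ≠ 0 := by omega
    -- the set of differing coordinates
    have hDcard : (Finset.univ.filter fun j => u.1 j ≠ v.1 j).card = k + 1 := h
    -- choose i and prove membership of w = update u i (v i)
    have hmain : ∃ i : Fin n, u.1 i ≠ v.1 i ∧ Function.update u.1 i (v.1 i) ∈ V := by
      by_cases hex : ∃ i, u.1 i ≠ v.1 i ∧ v.1 i = false
      · obtain ⟨i, hi, hvi⟩ := hex
        refine ⟨i, hi, ?_⟩
        rw [hvi]
        exact flip_mem hdc u i
      · push_neg at hex
        -- then u ≤ v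
        have hle : ∀ j, u.1 j ≤ v.1 j := by
          intro j
          by_cases hj : u.1 j = v.1 j
          · exact le_of_eq hj
          · have := hex j hj
            simp [this]
        have hD : (Finset.univ.filter fun j => u.1 j ≠ v.1 j).Nonempty := by
          rw [← Finset.card_pos, hDcard]; omega
        obtain ⟨i, hi⟩ := hD
        rw [Finset.mem_filter] at hi
        refine ⟨i, hi.2, hdc _ v.1 (fun j => ?_) v.2⟩
        rcases eq_or_ne j i with rfl | hj
        · simp
        · simpa [Function.update_of_ne hj] using hle j
    obtain ⟨i, hi, hw⟩ := hmain
    set w : {u : Vtx n // u ∈ V} := ⟨Function.update u.1 i (v.1 i), hw⟩ with hwdef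
    have hadj : (cubeGraph V).Adj u w := ham_update_self u.1 i (v.1 i) hi
    have hamk : hammingDist w.1 v.1 = k := by
      show hammingDist (Function.update u.1 i (v.1 i)) v.1 = k
      rw [ham_filter, filter_update, Finset.card_erase_of_mem (by simp [hi]), hDcard]; omega
    obtain ⟨p, hp⟩ := ih w v hamk
    exact ⟨SimpleGraph.Walk.cons hadj p, by simp [hp]⟩

lemma ham_le_walk {u v : {u : Vtx n // u ∈ V}} (p : (cubeGraph V).Walk u v) :
    hammingDist u.1 v.1 ≤ p.length := by
  induction p with
  | nil => simp
  | @cons a b c h p ih =>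
    calc hammingDist a.1 c.1 ≤ hammingDist a.1 b.1 + hammingDist b.1 c.1 :=
          hammingDist_triangle _ _ _
      _ ≤ 1 + p.length := by
          have : hammingDist a.1 b.1 = 1 := h
          omega
      _ = (SimpleGraph.Walk.cons h p).length := by simp [add_comm]

lemma dist_eq (hdc : DownClosed V) (u v : {u : Vtx n // u ∈ V}) :
    (cubeGraph V).dist u v = hammingDist u.1 v.1 := by
  obtain ⟨p, hp⟩ := exists_walk hdc _ u v rfl
  refine le_antisymm ((SimpleGraph.dist_le p).trans hp.le) ?_
  obtain ⟨q, hq⟩ := SimpleGraph.Reachable.exists_walk_length_eq_dist ⟨p⟩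
  rw [← hq]
  exact ham_le_walk q

/-- vertices with coordinate `i` equal to `true` -/
def trueSet (V : Finset (Vtx n)) (i : Fin n) : Finset {u : Vtx n // u ∈ V} :=
  Finset.univ.filter fun u => u.1 i = true

/-- vertices with coordinate `i` equal to `false` -/
def falseSet (V : Finset (Vtx n)) (i : Fin n) : Finset {u : Vtx n // u ∈ V} :=
  Finset.univ.filter fun u => u.1 i = false

lemma eq_flip (hdc : DownClosed V) {i : Fin n} {a b : {u : Vtx n // u ∈ V}}
    (h1 : hammingDist a.1 b.1 = 1) (ha : a.1 i = true) (hb : b.1 i = false) :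
    b = dflip hdc a i := by
  have hdiff : a.1 i ≠ b.1 i := by rw [ha, hb]; simp
  have hs : (Finset.univ.filter fun j => a.1 j ≠ b.1 j) = {i} := by
    rw [ham_filter] at h1
    obtain ⟨x, hx⟩ := Finset.card_eq_one.mp h1
    have : i ∈ (Finset.univ.filter fun j => a.1 j ≠ b.1 j) := by simp [hdiff]
    rw [hx] at this ⊢
    rw [Finset.mem_singleton] at this
    rw [this]
  apply Subtype.ext
  funext j
  rcases eq_or_ne j i with rfl | hj
  · simp [dflip, hb]
  · have : j ∉ (Finset.univ.filter fun k => a.1 k ≠ b.1 k) := by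
      rw [hs]; simpa using hj
    simp only [Finset.mem_filter, Finset.mem_univ, true_and, not_not] at this
    simp [dflip, Function.update_of_ne hj, this]

lemma dirEdges_card (hdc : DownClosed V) (i : Fin n) :
    (dirEdges V i).card = (trueSet V i).card := by
  symm
  apply Finset.card_bij (fun u _ => s(u, dflip hdc u i))
  · intro a ha
    rw [trueSet, Finset.mem_filter] at ha
    have hadj : (cubeGraph V).Adj a (dflip hdc a i) :=
      ham_update_self a.1 i false (by rw [ha.2]; simp)
    rw [dirEdges, Finset.mem_filter]
    constructor
    · rw [SimpleGraph.mem_edgeFinset]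
      exact hadj
    · simp [dflip, ha.2]
  · intro a ha a' ha' heq
    rw [trueSet, Finset.mem_filter] at ha ha'
    rw [Sym2.eq_iff] at heq
    rcases heq with ⟨h, -⟩ | ⟨h, -⟩
    · exact h
    · exfalso
      have : a.1 i = false := by rw [h]; simp [dflip]
      rw [ha.2] at this; simp at this
  · intro e he
    rw [dirEdges, Finset.mem_filter] at he
    obtain ⟨heE, hei⟩ := he
    revert heE hei
    induction e using Sym2.ind with
    | _ a b =>
      intro heE hei
      rw [SimpleGraph.mem_edgeFinset] at heE
      have h1 : hammingDist a.1 b.1 = 1 := heE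
      rw [Sym2.lift_mk] at hei
      have hdiff : a.1 i ≠ b.1 i := by simpa using hei
      cases hai : a.1 i with
      | true =>
        have hbi : b.1 i = false := by
          cases hbi : b.1 i
          · rfl
          · rw [hai, hbi] at hdiff; exact absurd rfl hdiff
        exact ⟨a, by simp [trueSet, hai], by rw [eq_flip hdc h1 hai hbi]⟩
      | false =>
        have hbi : b.1 i = true := by
          cases hbi : b.1 i
          · rw [hai, hbi] at hdiff; exact absurd rfl hdiff
          · rfl
        have h1' : hammingDist b.1 a.1 = 1 := (hammingDist_comm a.1 b.1) ▸ h1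
        refine ⟨b, by simp [trueSet, hbi], ?_⟩
        rw [← eq_flip hdc h1' hbi hai]
        exact Sym2.eq_swap

lemma edge_card_eq_sum :
    (cubeGraph V).edgeFinset.card = ∑ i : Fin n, (dirEdges V i).card := by
  unfold dirEdges
  have : ∀ i : Fin n, ((cubeGraph V).edgeFinset.filter
      (fun e => Sym2.lift ⟨fun u v => decide (u.1 i ≠ v.1 i),
        fun u v => by rw [decide_eq_decide]; exact ne_comm⟩ e = true)).card
      = ∑ e ∈ (cubeGraph V).edgeFinset,
          if (Sym2.lift ⟨fun u v => decide (u.1 i ≠ v.1 i),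
            fun u v => by rw [decide_eq_decide]; exact ne_comm⟩ e = true) then 1 else 0 :=
    fun i => Finset.card_filter _ _
  simp_rw [this]
  rw [Finset.sum_comm]
  rw [Finset.card_eq_sum_ones (cubeGraph V).edgeFinset]
  apply Finset.sum_congr rfl
  intro e he
  rw [SimpleGraph.mem_edgeFinset] at he
  revert he
  induction e using Sym2.ind with
  | _ a b =>
    intro he
    have h1 : hammingDist a.1 b.1 = 1 := he
    simp only [Sym2.lift_mk, decide_eq_true_eq]
    have : ∀ i : Fin n, (if decide (a.1 i ≠ b.1 i) = true then 1 else 0)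
        = if a.1 i ≠ b.1 i then 1 else 0 := by
      intro i; simp
    rw [← Finset.card_filter, ← ham_filter, h1]

lemma two_mul_sym2_sum {α : Type*} [Fintype α] [DecidableEq α]
    (f : {f : α → α → ℕ // ∀ a b, f a b = f b a}) (hdiag : ∀ a, f.1 a a = 0) :
    2 * ∑ p : Sym2 α, Sym2.lift f p = ∑ a : α, ∑ b : α, f.1 a b := by
  have h1 : ∑ a : α, ∑ b : α, f.1 a b = ∑ x : α × α, Sym2.lift f (Sym2.mk x.1 x.2) := by
    symm
    rw [Fintype.sum_prod_type]
    apply Finset.sum_congr rfl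
    intro a _
    apply Finset.sum_congr rfl
    intro b _
    exact Sym2.lift_mk f a b
  rw [h1, Finset.sum_comp (Sym2.lift f) (fun x : α × α => Sym2.mk x.1 x.2)]
  have himg : Finset.univ.image (fun x : α × α => Sym2.mk x.1 x.2) = Finset.univ := by
    apply Finset.image_univ_of_surjective
    intro p
    induction p using Sym2.ind with
    | _ a b => exact ⟨(a, b), rfl⟩
  rw [himg, Finset.mul_sum]
  symm
  apply Finset.sum_congr rfl
  intro p _
  induction p using Sym2.ind with
  | _ a b =>
    rcases eq_or_ne a b with rfl | hab
    · simp [Sym2.lift_mk, hdiag]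
    · have hfil : Finset.univ.filter (fun x : α × α => Sym2.mk x.1 x.2 = s(a, b))
          = {(a, b), (b, a)} := by
        ext ⟨c, d⟩
        simp only [Finset.mem_filter, Finset.mem_univ, true_and, Finset.mem_insert,
          Finset.mem_singleton, Prod.mk.injEq]
        constructor
        · intro h
          rcases Sym2.eq_iff.mp h with ⟨h1, h2⟩ | ⟨h1, h2⟩
          · exact Or.inl ⟨h1, h2⟩
          · exact Or.inr ⟨h1, h2⟩
        · rintro (⟨rfl, rfl⟩ | ⟨rfl, rfl⟩)
          · rfl
          · exact Sym2.eq_swap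
      rw [hfil, Finset.card_pair (by simp [Prod.ext_iff, hab])]
      rw [smul_eq_mul]

lemma trueSet_card_add (i : Fin n) :
    (trueSet V i).card + (falseSet V i).card = V.card := by
  have : falseSet V i = Finset.univ.filter (fun u : {u : Vtx n // u ∈ V} => ¬ u.1 i = true) := by
    ext u
    simp [falseSet, Bool.not_eq_true]
  rw [this, trueSet, Finset.card_filter_add_card_filter_not, Finset.card_univ,
    Fintype.card_coe]

lemma wiener_eq (hdc : DownClosed V) :
    wiener (cubeGraph V) = ∑ i : Fin n, (trueSet V i).card * (falseSet V i).card := by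
  have hw : wiener (cubeGraph V)
      = ∑ p : Sym2 {u : Vtx n // u ∈ V},
          Sym2.lift ⟨fun u v => hammingDist u.1 v.1,
            fun a b => hammingDist_comm a.1 b.1⟩ p := by
    unfold wiener
    apply Finset.sum_congr rfl
    intro p _
    induction p using Sym2.ind with
    | _ a b => simp only [Sym2.lift_mk]; exact dist_eq hdc a b
  refine Nat.eq_of_mul_eq_mul_left (show 0 < 2 by norm_num) ?_
  rw [hw, two_mul_sym2_sum _ (fun a => hammingDist_self a.1)]
  have hham : ∀ a b : {u : Vtx n // u ∈ V}, hammingDist a.1 b.1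
      = ∑ i : Fin n, if a.1 i ≠ b.1 i then 1 else 0 := by
    intro a b
    rw [ham_filter, Finset.card_filter]
  simp only [hham]
  have hswap : (∑ a : {u : Vtx n // u ∈ V}, ∑ b : {u : Vtx n // u ∈ V},
        ∑ i : Fin n, if a.1 i ≠ b.1 i then 1 else 0)
      = ∑ i : Fin n, ∑ a : {u : Vtx n // u ∈ V}, ∑ b : {u : Vtx n // u ∈ V},
        (if a.1 i ≠ b.1 i then 1 else 0) := by
    rw [Finset.sum_congr rfl (fun a _ => Finset.sum_comm)]
    exact Finset.sum_comm
  rw [hswap, Finset.mul_sum]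
  apply Finset.sum_congr rfl
  intro i _
  have hb : ∀ a : {u : Vtx n // u ∈ V},
      (∑ b : {u : Vtx n // u ∈ V}, if a.1 i ≠ b.1 i then 1 else 0)
        = (Finset.univ.filter fun b : {u : Vtx n // u ∈ V} => a.1 i ≠ b.1 i).card :=
    fun a => (Finset.card_filter _ _).symm
  simp only [hb]
  have hT : ∀ a : {u : Vtx n // u ∈ V}, a.1 i = true →
      (Finset.univ.filter fun b : {u : Vtx n // u ∈ V} => a.1 i ≠ b.1 i) = falseSet V i := by
    intro a ha
    ext b
    simp only [Finset.mem_filter, Finset.mem_univ, true_and, falseSet, ha, ne_eq]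
    cases hbv : b.1 i <;> simp [hbv]
  have hF : ∀ a : {u : Vtx n // u ∈ V}, a.1 i = false →
      (Finset.univ.filter fun b : {u : Vtx n // u ∈ V} => a.1 i ≠ b.1 i) = trueSet V i := by
    intro a ha
    ext b
    simp only [Finset.mem_filter, Finset.mem_univ, true_and, trueSet, ha, ne_eq]
    cases hbv : b.1 i <;> simp [hbv]
  rw [← Finset.sum_filter_add_sum_filter_not Finset.univ
    (fun a : {u : Vtx n // u ∈ V} => a.1 i = true)]
  have hfneg : Finset.univ.filter (fun a : {u : Vtx n // u ∈ V} => ¬ a.1 i = true)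
      = falseSet V i := by
    ext a
    simp [falseSet, Bool.not_eq_true]
  have e1 : ∑ a ∈ Finset.univ.filter (fun a : {u : Vtx n // u ∈ V} => a.1 i = true),
      (Finset.univ.filter fun b : {u : Vtx n // u ∈ V} => a.1 i ≠ b.1 i).card
      = (trueSet V i).card * (falseSet V i).card := by
    rw [Finset.sum_congr rfl (fun a ha => by
      rw [hT a (Finset.mem_filter.mp ha).2]), Finset.sum_const, smul_eq_mul]
    rfl
  have e2 : ∑ a ∈ Finset.univ.filter (fun a : {u : Vtx n // u ∈ V} => ¬ a.1 i = true),
      (Finset.univ.filter fun b : {u : Vtx n // u ∈ V} => a.1 i ≠ b.1 i).card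
      = (falseSet V i).card * (trueSet V i).card := by
    rw [Finset.sum_congr rfl (fun a ha => by
      rw [hF a (by simpa [Bool.not_eq_true] using (Finset.mem_filter.mp ha).2)]),
      Finset.sum_const, smul_eq_mul, hfneg]
  rw [e1, e2]
  ring

end Aux

/-- For a daisy cube `G`, with `|E_i|` the number of edges using
direction `i`: `W(G) = |V(G)|·|E(G)| - ∑_{i=1}^n |E_i|²`. -/
theorem daisy_wiener_formula {n : ℕ} (V : Finset (Vtx n))
    (hne : V.Nonempty) (hdc : DownClosed V) :
    (wiener (cubeGraph V) : ℤ) =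
      (V.card : ℤ) * ((cubeGraph V).edgeFinset.card : ℤ) -
        ∑ i : Fin n, ((dirEdges V i).card : ℤ) ^ 2 := by
  rw [wiener_eq hdc, edge_card_eq_sum]
  simp only [dirEdges_card hdc]
  push_cast
  rw [Finset.mul_sum, ← Finset.sum_sub_distrib]
  apply Finset.sum_congr rfl
  intro i _
  have h2 := trueSet_card_add (V := V) i
  have h2' : (V.card : ℤ) = (trueSet V i).card + (falseSet V i).card := by
    exact_mod_cast h2.symm
  rw [h2']
  ring
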